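/- arXiv:1804.11066 — 4 statements merged into one kernel-verified Lean document; each statement's English description precedes it below -/
import Mathlib

section
/- Let W be a Heyting frame. For X ⊆ W and Y ∈ Gal(W), define X → Y := {y ∈ W : ∀x ∈ X, x ∘ y ∈ Y}. Then X → Y is Galois-closed; in fact X → Y = (X ⇒ Y^▷)^◁, where X ⇒ Y^▷ := {x ⇒ z : x ∈ X, z ∈ Y^▷}. -/
def polR {α β : Type*} (R : α → β → Prop) (X : Set α) : Set β :=
  {z | ∀ x ∈ X, R x z}

def polL {α β : Type*} (R : α → β → Prop) (Z : Set β) : Set α :=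
  {x | ∀ z ∈ Z, R x z}

def gal {α β : Type*} (R : α → β → Prop) (X : Set α) : Set α :=
  polL R (polR R X)

/-- A Heyting frame `⟨W, W', R, ∘, ε, ⇒⟩`: a polarity together with a monoid
structure on `W` and a residuation map `⇒ : W × W' → W'`, validating the
structural rules of exchange, weakening and contraction. -/
structure HeytingFrame (α β : Type*) where
  R : α → β → Prop
  op : α → α → α
  eps : α
  imp : α → β → β
  op_assoc : ∀ x y z, op (op x y) z = op x (op y z)
  eps_op : ∀ x, op eps x = x
  op_eps : ∀ x, op x eps = x
  resid : ∀ x y z, R (op x y) z ↔ R y (imp x z)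
  rule_e : ∀ x y z, R (op x y) z → R (op y x) z
  rule_w : ∀ x z, R eps z → R x z
  rule_c : ∀ x z, R (op x x) z → R x z

lemma polL_closed {α β : Type*} (R : α → β → Prop) (Z : Set β) :
    polL R Z = gal R (polL R Z) := by
  ext x
  constructor
  · intro hx z hz
    exact hz x hx
  · intro hx z hz
    exact hx z (fun y hy => hy z hz)

/-- For `X ⊆ W` and Galois-closed `Y`, the set
`X → Y = {y : ∀ x ∈ X, x ∘ y ∈ Y}` is Galois-closed; in fact it equals
`(X ⇒ Y^▷)^◁` where `X ⇒ Y^▷ = {x ⇒ z : x ∈ X, z ∈ Y^▷}`. -/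
theorem stmt_9 {α β : Type*} (H : HeytingFrame α β) (X Y : Set α)
    (hY : Y = gal H.R Y) :
    {y : α | ∀ x ∈ X, H.op x y ∈ Y} = gal H.R {y : α | ∀ x ∈ X, H.op x y ∈ Y} ∧
    {y : α | ∀ x ∈ X, H.op x y ∈ Y} =
      polL H.R {z : β | ∃ x ∈ X, ∃ w ∈ polR H.R Y, z = H.imp x w} := by
  have key : {y : α | ∀ x ∈ X, H.op x y ∈ Y} =
      polL H.R {z : β | ∃ x ∈ X, ∃ w ∈ polR H.R Y, z = H.imp x w} := by
    ext y
    constructor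
    · rintro hy z ⟨x, hx, w, hw, rfl⟩
      have : H.op x y ∈ Y := hy x hx
      rw [hY] at this
      exact (H.resid x y w).mp (this w hw)
    · intro hy x hx
      rw [hY]
      intro w hw
      exact (H.resid x y w).mpr (hy (H.imp x w) ⟨x, hx, w, hw, rfl⟩)
  exact ⟨by rw [key]; exact polL_closed _ _, key⟩
end

section
/- Let W be a Heyting frame. Then for all Galois-closed X, Y, Z ∈ Gal(W): X ∩ Y ⊆ Z if and only if X ⊆ Y → Z, where Y → Z = {y ∈ W : ∀x ∈ Y, x ∘ y ∈ Z}. Consequently, Gal(W) with intersection as meet, X ∨ Y = γ(X ∪ Y) as join, and → as implication is a complete Heyting algebra. -/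
/-- A witness that `Gal(W)` of a Heyting frame is a complete Heyting algebra
(a frame), with intersection as meet, `γ` of union as join, and
`Y → Z = {y : ∀ x ∈ Y, x ∘ y ∈ Z}` as Heyting implication. -/
structure GalFrame {α β : Type*} (H : HeytingFrame α β) where
  [inst : Order.Frame {X : Set α // X = gal H.R X}]
  le_iff : ∀ X Y : {X : Set α // X = gal H.R X}, X ≤ Y ↔ X.1 ⊆ Y.1
  inf_eq : ∀ X Y : {X : Set α // X = gal H.R X}, (X ⊓ Y).1 = X.1 ∩ Y.1
  sup_eq : ∀ X Y : {X : Set α // X = gal H.R X}, (X ⊔ Y).1 = gal H.R (X.1 ∪ Y.1)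
  himp_eq : ∀ X Y : {X : Set α // X = gal H.R X},
    (X ⇨ Y).1 = {y : α | ∀ x ∈ X.1, H.op x y ∈ Y.1}

namespace GalAux

variable {α β : Type*}

theorem subset_gal (R : α → β → Prop) (X : Set α) : X ⊆ gal R X :=
  fun x hx z hz => hz x hx

theorem polR_anti (R : α → β → Prop) {X Y : Set α} (h : X ⊆ Y) :
    polR R Y ⊆ polR R X := fun z hz x hx => hz x (h hx)

theorem polL_anti (R : α → β → Prop) {X Y : Set β} (h : X ⊆ Y) :
    polL R Y ⊆ polL R X := fun x hx z hz => hx z (h hz)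

theorem gal_mono (R : α → β → Prop) {X Y : Set α} (h : X ⊆ Y) :
    gal R X ⊆ gal R Y := polL_anti R (polR_anti R h)

theorem polL_closed (R : α → β → Prop) (S : Set β) :
    polL R S = gal R (polL R S) := by
  apply Set.Subset.antisymm (subset_gal R _)
  apply polL_anti R
  exact fun z hz x hx => hx z hz

theorem gal_idem (R : α → β → Prop) (X : Set α) :
    gal R X = gal R (gal R X) := polL_closed R _

variable (H : HeytingFrame α β)

/-- Generalized weakening. -/
theorem genw : ∀ x y z, H.R y z → H.R (H.op x y) z := by
  intro x y z h
  apply H.rule_e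
  rw [H.resid]
  apply H.rule_w
  rw [← H.resid, H.op_eps]
  exact h

def himpSet (X Z : Set α) : Set α := {y : α | ∀ x ∈ X, H.op x y ∈ Z}

theorem himpSet_closed (X Z : Set α) (hZ : Z = gal H.R Z) :
    himpSet H X Z = gal H.R (himpSet H X Z) := by
  have key : himpSet H X Z =
      polL H.R {t | ∃ x ∈ X, ∃ z ∈ polR H.R Z, t = H.imp x z} := by
    ext y
    constructor
    · rintro hy t ⟨x, hx, z, hz, rfl⟩
      rw [← H.resid]
      exact hz _ (hy x hx)
    · intro hy x hx
      rw [hZ]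
      intro z hz
      rw [H.resid]
      exact hy _ ⟨x, hx, z, hz, rfl⟩
  rw [key]
  exact polL_closed H.R _

/-- The main adjunction. -/
theorem main_adj (X Y Z : Set α) (hX : X = gal H.R X) (hY : Y = gal H.R Y)
    (hZ : Z = gal H.R Z) :
    X ∩ Y ⊆ Z ↔ X ⊆ himpSet H Y Z := by
  constructor
  · intro h y hy x hx
    apply h
    constructor
    · rw [hX]
      intro z hz
      exact genw H x y z (hz y hy)
    · rw [hY]
      intro z hz
      exact H.rule_e _ _ _ (genw H y x z (hz x hx))
  · intro h w ⟨hwX, hwY⟩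
    have h1 : H.op w w ∈ Z := h hwX w hwY
    rw [hZ] at h1 ⊢
    intro z hz
    exact H.rule_c _ _ (h1 z hz)

abbrev C := {X : Set α // X = gal H.R X}

instance : InfSet (C H) :=
  ⟨fun s => ⟨⋂ X ∈ s, X.1, by
    apply Set.Subset.antisymm (subset_gal H.R _)
    intro w hw
    simp only [Set.mem_iInter]
    intro X hX
    rw [X.2]
    exact gal_mono H.R (Set.biInter_subset_of_mem hX) hw⟩⟩

instance : CompleteLattice (C H) :=
  completeLatticeOfInf _ (fun s => by
    constructor
    · intro X hX
      exact fun w hw => (Set.mem_iInter₂.1 hw) X hX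
    · intro b hb w hw
      exact Set.mem_iInter₂.2 (fun X hX => hb hX hw))

theorem le_iff' (X Y : C H) : X ≤ Y ↔ X.1 ⊆ Y.1 := Iff.rfl

theorem inf_eq' (X Y : C H) : (X ⊓ Y).1 = X.1 ∩ Y.1 := by
  apply Set.Subset.antisymm
  · exact Set.subset_inter ((le_iff' H _ _).1 inf_le_left)
      ((le_iff' H _ _).1 inf_le_right)
  · have hcl : X.1 ∩ Y.1 = gal H.R (X.1 ∩ Y.1) := by
      apply Set.Subset.antisymm (subset_gal H.R _)
      apply Set.subset_inter
      · calc gal H.R (X.1 ∩ Y.1) ⊆ gal H.R X.1 :=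
            gal_mono H.R Set.inter_subset_left
          _ = X.1 := X.2.symm
      · calc gal H.R (X.1 ∩ Y.1) ⊆ gal H.R Y.1 :=
            gal_mono H.R Set.inter_subset_right
          _ = Y.1 := Y.2.symm
    exact (le_iff' H ⟨X.1 ∩ Y.1, hcl⟩ (X ⊓ Y)).1
      (le_inf ((le_iff' H _ _).2 Set.inter_subset_left)
        ((le_iff' H _ _).2 Set.inter_subset_right))

theorem sup_eq' (X Y : C H) : (X ⊔ Y).1 = gal H.R (X.1 ∪ Y.1) := by
  apply Set.Subset.antisymm
  · have : X ⊔ Y ≤ ⟨gal H.R (X.1 ∪ Y.1), gal_idem H.R _⟩ := by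
      apply sup_le
      · exact (le_iff' H _ _).2
          (Set.Subset.trans Set.subset_union_left (subset_gal H.R _))
      · exact (le_iff' H _ _).2
          (Set.Subset.trans Set.subset_union_right (subset_gal H.R _))
    exact (le_iff' H _ _).1 this
  · have h1 : X.1 ∪ Y.1 ⊆ (X ⊔ Y).1 :=
      Set.union_subset ((le_iff' H _ _).1 le_sup_left)
        ((le_iff' H _ _).1 le_sup_right)
    calc gal H.R (X.1 ∪ Y.1) ⊆ gal H.R (X ⊔ Y).1 := gal_mono H.R h1
      _ = (X ⊔ Y).1 := ((X ⊔ Y).2).symm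

def chimp (X Y : C H) : C H := ⟨himpSet H X.1 Y.1, himpSet_closed H _ _ Y.2⟩

theorem le_chimp_iff (X Y Z : C H) : X ≤ chimp H Y Z ↔ X ⊓ Y ≤ Z := by
  rw [le_iff', le_iff', inf_eq']
  exact (main_adj H X.1 Y.1 Z.1 X.2 Y.2 Z.2).symm

instance galFrame : Order.Frame (C H) where
  __ := (inferInstance : CompleteLattice (C H))
  himp := chimp H
  le_himp_iff a b c := le_chimp_iff H a b c
  compl a := chimp H a ⊥
  himp_bot _ := rfl

end GalAux

/-- In a Heyting frame, for Galois-closed `X, Y, Z`: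
`X ∩ Y ⊆ Z ↔ X ⊆ Y → Z`; consequently `Gal(W)` with intersection as meet,
`γ(X ∪ Y)` as join and `→` as implication is a complete Heyting algebra. -/
theorem stmt_10 {α β : Type*} (H : HeytingFrame α β) :
    (∀ X Y Z : Set α, X = gal H.R X → Y = gal H.R Y → Z = gal H.R Z →
      (X ∩ Y ⊆ Z ↔ X ⊆ {y : α | ∀ x ∈ Y, H.op x y ∈ Z})) ∧
    Nonempty (GalFrame H) := by
  refine ⟨fun X Y Z hX hY hZ => GalAux.main_adj H X Y Z hX hY hZ, ⟨?_⟩⟩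
  exact
    { inst := GalAux.galFrame H
      le_iff := GalAux.le_iff' H
      inf_eq := GalAux.inf_eq' H
      sup_eq := GalAux.sup_eq' H
      himp_eq := fun X Y => rfl }
end

section
/- Let A be a Heyting algebra and W_A = ⟨A, A, ≤, ∧, ⊤, →⟩ the associated Heyting frame. The map γ : A → Gal(W_A), a ↦ {a}^▷◁, is a Heyting algebra embedding: a ≤ b iff γ(a) ⊆ γ(b), and γ preserves ⊥, ∧, ∨, and →, where Gal(W_A) carries the Heyting algebra structure with intersection as meet, closure of union as join, and X → Y = {y : ∀x ∈ X, x ∧ y ∈ Y}. -/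
/-- The Galois closure `γ(X) = X^▷◁` in the frame `W_A = ⟨A, A, ≤, ∧, ⊤, →⟩`:
lower bounds of the upper bounds. -/
def cl {A : Type*} [HeytingAlgebra A] (X : Set A) : Set A :=
  lowerBounds (upperBounds X)

lemma cl_singleton {A : Type*} [HeytingAlgebra A] (a : A) : cl {a} = Set.Iic a := by
  ext x
  constructor
  · intro h; exact h (by rintro y rfl; exact le_rfl)
  · intro h y hy; exact le_trans h (hy rfl)

/-- The map `γ : A → Gal(W_A)`, `a ↦ {a}^▷◁`, is a Heyting algebra embedding:
`a ≤ b ↔ γ(a) ⊆ γ(b)`, and `γ` preserves `⊥`, `∧`, `∨` and `→`, where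
`Gal(W_A)` has intersection as meet, closure of union as join, bottom `γ(∅)`
and implication `X → Y = {y : ∀ x ∈ X, x ⊓ y ∈ Y}`. -/
theorem stmt_12 {A : Type*} [HeytingAlgebra A] :
    (∀ a b : A, a ≤ b ↔ cl {a} ⊆ cl {b}) ∧
    cl {(⊥ : A)} = cl (∅ : Set A) ∧
    (∀ a b : A, cl {a ⊓ b} = cl {a} ∩ cl {b}) ∧
    (∀ a b : A, cl {a ⊔ b} = cl (cl {a} ∪ cl {b})) ∧
    (∀ a b : A, cl {a ⇨ b} = {y : A | ∀ x ∈ cl {a}, x ⊓ y ∈ cl {b}}) := by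
  refine ⟨?_, ?_, ?_, ?_, ?_⟩
  · intro a b
    simp only [cl_singleton]
    constructor
    · intro h x hx; exact le_trans hx h
    · intro h; exact h (le_refl a)
  · have : cl (∅ : Set A) = Set.Iic ⊥ := by
      ext x
      constructor
      · intro h
        simp only [Set.Iic, Set.mem_setOf_eq]
        exact h (fun y hy => absurd hy (Set.notMem_empty y))
      · intro h y _; exact le_trans h bot_le
    rw [cl_singleton, this]
  · intro a b
    simp only [cl_singleton]
    ext x; simp [le_inf_iff]
  · intro a b
    simp only [cl_singleton]
    have : upperBounds (Set.Iic a ∪ Set.Iic b) = Set.Ici (a ⊔ b) := by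
      ext x
      constructor
      · intro h
        exact sup_le (h (Or.inl (le_refl a))) (h (Or.inr (le_refl b)))
      · rintro h y (hy | hy)
        · exact le_trans hy (le_trans le_sup_left h)
        · exact le_trans hy (le_trans le_sup_right h)
    rw [cl, this]
    ext x
    constructor
    · intro h y hy; exact le_trans h hy
    · intro h; exact h (le_refl _)
  · intro a b
    simp only [cl_singleton]
    ext y
    simp only [Set.mem_Iic, Set.mem_setOf_eq]
    constructor
    · intro h x hx
      calc x ⊓ y ≤ a ⊓ (a ⇨ b) := inf_le_inf hx h
        _ ≤ b := by simp [inf_himp]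
    · intro h
      rw [le_himp_iff, inf_comm]
      exact h a (le_refl a)
end

section
/- Let A be a Heyting algebra and W_A = ⟨A, A, ≤, ∧, ⊤, →⟩ the associated Heyting frame. The embedding γ : A → Gal(W_A) is a MacNeille completion: every X ∈ Gal(W_A) satisfies X = ⊔ {γ(a) : a ∈ A, γ(a) ⊆ X} and X = ⊓ {γ(a) : a ∈ A, X ⊆ γ(a)} in the complete lattice Gal(W_A). -/
/-- The embedding `γ : A → Gal(W_A)` is a MacNeille completion: every
Galois-closed `X` is the join (in `Gal(W_A)`, i.e. the closure of the union)
of the `γ(a) ⊆ X` and the meet (the intersection) of the `γ(a) ⊇ X`. -/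
theorem stmt_13 {A : Type*} [HeytingAlgebra A] (X : Set A) (hX : X = cl X) :
    X = cl (⋃ a ∈ {a : A | cl {a} ⊆ X}, cl {a}) ∧
    X = ⋂ a ∈ {a : A | X ⊆ cl {a}}, cl {a} := by
  constructor
  · have hU : (⋃ a ∈ {a : A | cl {a} ⊆ X}, cl {a}) = X := by
      apply Set.Subset.antisymm
      · intro x hx
        simp only [Set.mem_iUnion, Set.mem_setOf_eq] at hx
        obtain ⟨a, ha, hxa⟩ := hx
        exact ha hxa
      · intro x hx
        have hsub : cl {x} ⊆ X := by
          rw [cl_singleton, hX]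
          intro y hy b hb
          exact le_trans hy (hb hx)
        simp only [Set.mem_iUnion, Set.mem_setOf_eq]
        exact ⟨x, hsub, by rw [cl_singleton]; exact le_rfl⟩
    rw [hU, ← hX]
  · ext x
    simp only [Set.mem_iInter, Set.mem_setOf_eq, cl_singleton, Set.mem_Iic]
    constructor
    · intro hx a ha
      exact ha hx
    · intro h
      rw [hX]
      intro b hb
      exact h b (fun y hy => hb hy)
end
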